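/- Let m ≥ 1 be an integer and let β > α > 0 be real numbers with 3·(β − α − 1) ≤ −m. Define u : ℝ^m → ℝ by u(x) = ‖x‖^{−α}·sin(‖x‖^{β}). Then the function x ↦ ‖fderiv ℝ u x‖³ is not Lebesgue-integrable on the open unit ball B(0,1) ⊆ ℝ^m. -/

import Mathlib

open MeasureTheory

private 
lemma deriv_lower (m : ℕ) (α β : ℝ) (hα : 0 < α) (hβ : α < β)
    {ε : ℝ} (hε1 : ε ≤ 1) (hεc : β * (1 - ε ^ (2*β) / 2) - α ≥ (β - α)/2)
    {x : EuclideanSpace ℝ (Fin m)} (hx : 0 < ‖x‖) (hxε : ‖x‖ < ε) :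
    (β - α)/2 * ‖x‖ ^ (β - α - 1) ≤
      ‖fderiv ℝ (fun y : EuclideanSpace ℝ (Fin m) => ‖y‖ ^ (-α) * Real.sin (‖y‖ ^ β)) x‖ := by
  set u : EuclideanSpace ℝ (Fin m) → ℝ := fun y => ‖y‖ ^ (-α) * Real.sin (‖y‖ ^ β) with hu_def
  set r := ‖x‖ with hr_def
  have hx0 : x ≠ 0 := by simpa [hr_def, norm_pos_iff] using hx
  -- differentiability of norm
  have hdn : DifferentiableAt ℝ (fun y : EuclideanSpace ℝ (Fin m) => ‖y‖) x :=
    (contDiffAt_norm ℝ (n := 1) hx0).differentiableAt one_ne_zero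
  have hdu : DifferentiableAt ℝ u x := by
    exact (hdn.rpow_const (Or.inl hx.ne')).mul
      ((Real.differentiableAt_sin).comp x (hdn.rpow_const (Or.inl hx.ne')))
  -- 1D function
  set D : ℝ := (-α * r ^ (-α - 1)) * Real.sin (r ^ β)
      + r ^ (-α) * (Real.cos (r ^ β) * (β * r ^ (β - 1))) with hD_def
  have hg : HasDerivAt (fun t : ℝ => t ^ (-α) * Real.sin (t ^ β)) D r := by
    have h1 : HasDerivAt (fun t : ℝ => t ^ (-α)) (-α * r ^ (-α - 1)) r :=
      Real.hasDerivAt_rpow_const (Or.inl hx.ne')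
    have h2 : HasDerivAt (fun t : ℝ => t ^ β) (β * r ^ (β - 1)) r :=
      Real.hasDerivAt_rpow_const (Or.inl hx.ne')
    have h3 : HasDerivAt (fun t : ℝ => Real.sin (t ^ β)) (Real.cos (r ^ β) * (β * r ^ (β - 1))) r :=
      h2.sin
    exact h1.mul h3
  -- curve
  set e : EuclideanSpace ℝ (Fin m) := r⁻¹ • x with he_def
  have he : ‖e‖ = 1 := by
    rw [he_def, norm_smul, norm_inv, Real.norm_eq_abs, abs_of_pos hx]
    field_simp
    rfl
  have hce : r • e = x := by
    rw [he_def, smul_smul, mul_inv_cancel₀ hx.ne', one_smul]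
  have hc : HasDerivAt (fun t : ℝ => t • e) e r := by
    simpa using (hasDerivAt_id r).smul_const e
  have hcomp : HasDerivAt (u ∘ fun t : ℝ => t • e) (fderiv ℝ u x e) r := by
    refine HasFDerivAt.comp_hasDerivAt r ?_ hc
    show HasFDerivAt u (fderiv ℝ u x) (r • e)
    rw [hce]; exact hdu.hasFDerivAt
  have heq : (fun t : ℝ => t ^ (-α) * Real.sin (t ^ β)) =ᶠ[nhds r] (u ∘ fun t : ℝ => t • e) := by
    filter_upwards [Ioi_mem_nhds hx] with t ht
    simp only [Function.comp, hu_def, norm_smul, he, mul_one, Real.norm_eq_abs,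
      abs_of_pos (Set.mem_Ioi.mp ht)]
  have hg2 : HasDerivAt (fun t : ℝ => t ^ (-α) * Real.sin (t ^ β)) (fderiv ℝ u x e) r :=
    hcomp.congr_of_eventuallyEq heq
  have hDeq : D = fderiv ℝ u x e := hg.unique hg2
  have hle : |D| ≤ ‖fderiv ℝ u x‖ := by
    calc |D| = ‖fderiv ℝ u x e‖ := by rw [hDeq]; rfl
    _ ≤ ‖fderiv ℝ u x‖ * ‖e‖ := (fderiv ℝ u x).le_opNorm e
    _ = ‖fderiv ℝ u x‖ := by rw [he, mul_one]
  refine le_trans ?_ hle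
  -- now the estimate δ r^{β-α-1} ≤ D ≤ |D|
  have hrβ : (0:ℝ) ≤ r ^ β := Real.rpow_nonneg hx.le β
  have hsin : Real.sin (r ^ β) ≤ r ^ β := Real.sin_le hrβ
  have hra : r ^ (-α - 1) * r ^ β = r ^ (β - α - 1) := by
    rw [← Real.rpow_add hx]; ring_nf
  have hrb : r ^ (-α) * r ^ (β - 1) = r ^ (β - α - 1) := by
    rw [← Real.rpow_add hx]; ring_nf
  have hcos : 1 - ε ^ (2*β) / 2 ≤ Real.cos (r ^ β) := by
    refine le_trans ?_ (Real.one_sub_sq_div_two_le_cos (x := r ^ β))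
    have h1 : (r ^ β) ^ 2 = r ^ (2*β) := by
      rw [sq, ← Real.rpow_add hx]; ring_nf
    have hβ0 : (0:ℝ) < β := hα.trans hβ
    have h2 : r ^ (2*β) ≤ ε ^ (2*β) :=
      Real.rpow_le_rpow hx.le hxε.le (by nlinarith)
    rw [h1]; linarith
  have hrs : (0:ℝ) < r ^ (β - α - 1) := Real.rpow_pos_of_pos hx _
  have hD : (β - α)/2 * r ^ (β - α - 1) ≤ D := by
    have hr1 : (0:ℝ) ≤ r ^ (-α - 1) := (Real.rpow_pos_of_pos hx _).le
    have e1 : -α * r ^ (-α - 1) * Real.sin (r ^ β) ≥ -α * r ^ (β - α - 1) := by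
      have : r ^ (-α - 1) * Real.sin (r ^ β) ≤ r ^ (β - α - 1) := by
        calc r ^ (-α - 1) * Real.sin (r ^ β) ≤ r ^ (-α - 1) * r ^ β :=
          mul_le_mul_of_nonneg_left hsin hr1
        _ = r ^ (β - α - 1) := hra
      nlinarith
    have e2 : r ^ (-α) * (Real.cos (r ^ β) * (β * r ^ (β - 1)))
        = β * Real.cos (r ^ β) * r ^ (β - α - 1) := by
      rw [← hrb]; ring
    have hβ0 : (0:ℝ) < β := hα.trans hβ
    have e3 : β * (1 - ε ^ (2*β) / 2) * r ^ (β - α - 1)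
        ≤ β * Real.cos (r ^ β) * r ^ (β - α - 1) :=
      mul_le_mul_of_nonneg_right (mul_le_mul_of_nonneg_left hcos hβ0.le) hrs.le
    have e4 : (β - α)/2 * r ^ (β - α - 1)
        ≤ (β * (1 - ε ^ (2*β) / 2) - α) * r ^ (β - α - 1) :=
      mul_le_mul_of_nonneg_right hεc hrs.le
    rw [hD_def]
    nlinarith
  calc (β - α)/2 * r ^ (β - α - 1) ≤ D := hD
  _ ≤ |D| := le_abs_self D

set_option maxHeartbeats 1000000 in
/-- For the oscillating function `u(x) = ‖x‖^{-α} sin(‖x‖^β)` on `ℝᵐ` with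
`β > α > 0` and `3(β - α - 1) ≤ -m`, the cube of the operator norm of the Fréchet
derivative of `u` is not Lebesgue-integrable on the unit ball. -/
theorem oscillating_fderiv_cube_not_integrable (m : ℕ) (hm : 1 ≤ m) (α β : ℝ)
    (hα : 0 < α) (hβ : α < β) (h : 3 * (β - α - 1) ≤ -(m : ℝ)) :
    ¬ IntegrableOn
        (fun x : EuclideanSpace ℝ (Fin m) =>
          ‖fderiv ℝ
              (fun y : EuclideanSpace ℝ (Fin m) => ‖y‖ ^ (-α) * Real.sin (‖y‖ ^ β)) x‖ ^ 3)
        (Metric.ball 0 1) volume := by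
  have deriv_lower := fun {ε : ℝ} (hε1 : ε ≤ 1)
      (hεc : β * (1 - ε ^ (2*β) / 2) - α ≥ (β - α)/2)
      {x : EuclideanSpace ℝ (Fin m)} (hx : 0 < ‖x‖) (hxε : ‖x‖ < ε) =>
    deriv_lower m α β hα hβ hε1 hεc hx hxε
  intro hint
  set F : EuclideanSpace ℝ (Fin m) → ℝ := fun x =>
    ‖fderiv ℝ (fun y : EuclideanSpace ℝ (Fin m) => ‖y‖ ^ (-α) * Real.sin (‖y‖ ^ β)) x‖ ^ 3 with hF_def
  have hβ0 : (0:ℝ) < β := hα.trans hβ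
  have hδ : (0:ℝ) < (β - α)/2 := by linarith
  -- choose ε
  set a : ℝ := (β - α)/β with ha_def
  have ha0 : 0 < a := div_pos (by linarith) hβ0
  have ha1 : a < 1 := by rw [ha_def, div_lt_one hβ0]; linarith
  set ε : ℝ := a ^ (1/(2*β)) with hε_def
  have hε0 : 0 < ε := Real.rpow_pos_of_pos ha0 _
  have hε1 : ε < 1 := Real.rpow_lt_one ha0.le ha1 (by positivity)
  have hεpow : ε ^ (2*β) = a := by
    rw [hε_def, ← Real.rpow_mul ha0.le, one_div, inv_mul_cancel₀ (by positivity), Real.rpow_one]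
  have hεc : β * (1 - ε ^ (2*β) / 2) - α ≥ (β - α)/2 := by
    have hba : β * a = β - α := by rw [ha_def]; field_simp
    rw [ge_iff_le, hεpow]
    nlinarith
  -- annuli
  set r : ℕ → ℝ := fun k => ε * (1/2) ^ (k+1) with hr_def
  have hrpos : ∀ k, 0 < r k := fun k => by positivity
  have hrlt : ∀ k, r k < ε := fun k => by
    simp only [hr_def]
    have : ((1:ℝ)/2) ^ (k+1) < 1 := pow_lt_one₀ (by norm_num) (by norm_num) (Nat.succ_ne_zero k)
    nlinarith
  have hrsucc : ∀ k, r (k+1) = r k * (1/2) := fun k => by simp only [hr_def]; ring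
  have hranti : ∀ j k, j ≤ k → r k ≤ r j := fun j k hjk => by
    simp only [hr_def]
    have h2 : ((1:ℝ)/2) ^ (k+1) ≤ (1/2) ^ (j+1) :=
      pow_le_pow_of_le_one (by norm_num) (by norm_num) (by omega)
    nlinarith
  set A : ℕ → Set (EuclideanSpace ℝ (Fin m)) := fun k =>
    Metric.closedBall 0 (r k) \ Metric.closedBall 0 (r (k+1)) with hA_def
  have hAmeas : ∀ k, MeasurableSet (A k) :=
    fun k => measurableSet_closedBall.diff measurableSet_closedBall
  have hAdisj : Pairwise (Function.onFun Disjoint A) := by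
    have key : ∀ j k, j < k → Disjoint (A j) (A k) := by
      intro j k hjk
      rw [Set.disjoint_left]
      rintro x ⟨hx1, hx2⟩ ⟨hx3, _⟩
      exact hx2 (Metric.closedBall_subset_closedBall (hranti _ _ hjk) hx3)
    intro j k hjk
    rcases lt_or_gt_of_ne hjk with h' | h'
    · exact key j k h'
    · exact (key k j h').symm
  have hAsub : ∀ k, A k ⊆ Metric.ball 0 1 := by
    intro k x hx
    have := hx.1
    rw [Metric.mem_closedBall] at this
    rw [Metric.mem_ball]
    calc dist x 0 ≤ r k := this
    _ < ε := hrlt k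
    _ < 1 := hε1
  have hUsub : (⋃ k, A k) ⊆ Metric.ball 0 1 := Set.iUnion_subset hAsub
  have hintU : IntegrableOn F (⋃ k, A k) volume := hint.mono_set hUsub
  have hsum := MeasureTheory.hasSum_integral_iUnion hAmeas hAdisj hintU
  have htend := hsum.summable.tendsto_atTop_zero
  -- the constant
  set V : ℝ := (volume (Metric.ball (0:EuclideanSpace ℝ (Fin m)) 1)).toReal with hV_def
  have hV0 : 0 < V := by
    rw [hV_def]
    refine ENNReal.toReal_pos (Metric.measure_ball_pos volume 0 one_pos).ne' ?_
    exact measure_ball_lt_top.ne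
  set c : ℝ := ((β - α)/2)^3 * (1 - (1/2:ℝ)^m) * V with hc_def
  have hhalf : ((1:ℝ)/2)^m < 1 := pow_lt_one₀ (by norm_num) (by norm_num) (by omega)
  have hc0 : 0 < c := by
    rw [hc_def]
    have : (0:ℝ) < 1 - (1/2:ℝ)^m := by linarith
    positivity
  -- lower bound per annulus
  have hlow : ∀ k, c ≤ ∫ x in A k, F x := by
    intro k
    have hrk := hrpos k
    have hrk1 := hrpos (k+1)
    -- measure of annulus
    have hvol : (volume (A k)).toReal = ((r k)^m - (r (k+1))^m) * V := by
      rw [hA_def]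
      rw [measure_diff (Metric.closedBall_subset_closedBall (hranti k (k+1) (Nat.le_succ k)))
        measurableSet_closedBall.nullMeasurableSet measure_closedBall_lt_top.ne]
      rw [Measure.addHaar_closedBall volume 0 hrk.le, Measure.addHaar_closedBall volume 0 hrk1.le]
      have hfr : Module.finrank ℝ (EuclideanSpace ℝ (Fin m)) = m := by
        simp [finrank_euclideanSpace]
      rw [hfr]
      rw [ENNReal.toReal_sub_of_le
        (mul_le_mul_left (ENNReal.ofReal_le_ofReal
          (pow_le_pow_left₀ hrk1.le (hranti k (k+1) (Nat.le_succ k)) m)) _)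
        (ENNReal.mul_ne_top ENNReal.ofReal_ne_top measure_ball_lt_top.ne)]
      rw [ENNReal.toReal_mul, ENNReal.toReal_mul, ENNReal.toReal_ofReal (by positivity),
        ENNReal.toReal_ofReal (by positivity), hV_def]
      ring
    -- pointwise bound
    have hpt : ∀ x ∈ A k, ((β - α)/2 * (r k) ^ (β - α - 1))^3 ≤ F x := by
      intro x hx
      obtain ⟨hx1, hx2⟩ := hx
      rw [Metric.mem_closedBall, dist_zero_right] at hx1
      rw [Metric.mem_closedBall, dist_zero_right] at hx2
      push_neg at hx2
      have hx0 : 0 < ‖x‖ := lt_trans hrk1 hx2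
      have hxε : ‖x‖ < ε := lt_of_le_of_lt hx1 (hrlt k)
      have h1 := deriv_lower hε1.le hεc hx0 hxε
      have hexp : β - α - 1 ≤ 0 := by
        have : (1:ℝ) ≤ m := by exact_mod_cast hm
        linarith
      have h2 : (r k) ^ (β - α - 1) ≤ ‖x‖ ^ (β - α - 1) :=
        Real.rpow_le_rpow_of_nonpos hx0 hx1 hexp
      have h3 : (β - α)/2 * (r k) ^ (β - α - 1) ≤
          ‖fderiv ℝ (fun y : EuclideanSpace ℝ (Fin m) => ‖y‖ ^ (-α) * Real.sin (‖y‖ ^ β)) x‖ := by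
        refine le_trans ?_ h1
        nlinarith [Real.rpow_pos_of_pos hx0 (β - α - 1)]
      calc ((β - α)/2 * (r k) ^ (β - α - 1))^3
          ≤ ‖fderiv ℝ (fun y : EuclideanSpace ℝ (Fin m) => ‖y‖ ^ (-α) * Real.sin (‖y‖ ^ β)) x‖ ^ 3 := by
            refine pow_le_pow_left₀ ?_ h3 3
            positivity
      _ = F x := rfl
    have hkey := MeasureTheory.setIntegral_ge_of_const_le (hAmeas k)
      (lt_of_le_of_lt (measure_mono (fun x hx => hx.1)) measure_closedBall_lt_top).ne
      hpt (hint.mono_set (hAsub k))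
    refine le_trans ?_ hkey
    rw [smul_eq_mul, mul_comm (volume.real (A k)), measureReal_def, hvol]
    -- c ≤ (δ * r_k^e)^3 * ((r_k^m - r_{k+1}^m) * V)
    have hrkm : (r (k+1))^m = (r k)^m * (1/2)^m := by
      rw [hrsucc k, mul_pow]
    rw [hrkm]
    have hpow3 : ((r k) ^ (β - α - 1))^3 = (r k) ^ (3*(β - α - 1)) := by
      rw [← Real.rpow_natCast ((r k) ^ (β - α - 1)) 3, ← Real.rpow_mul hrk.le]
      norm_num
      ring_nf
    have hrs : (r k) ^ (3*(β - α - 1)) * (r k)^m = (r k) ^ (3*(β - α - 1) + m) := by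
      rw [← Real.rpow_natCast (r k) m, ← Real.rpow_add hrk]
    have hge1 : (1:ℝ) ≤ (r k) ^ (3*(β - α - 1) + m) := by
      have hle1 : r k ≤ 1 := le_trans (hrlt k).le hε1.le
      have : (r k) ^ (3*(β - α - 1) + m) ≥ (r k) ^ (0:ℝ) := by
        apply Real.rpow_le_rpow_of_exponent_ge hrk hle1
        linarith
      simpa using this
    have expand : ((β - α)/2 * (r k) ^ (β - α - 1))^3 * (((r k)^m - (r k)^m * (1/2)^m) * V)
        = ((β - α)/2)^3 * ((r k) ^ (3*(β - α - 1) + m)) * ((1 - (1/2:ℝ)^m) * V) := by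
      rw [mul_pow, hpow3, ← hrs]
      ring
    rw [expand, hc_def]
    have h1 : (0:ℝ) < ((β - α)/2)^3 := by positivity
    have h2 : (0:ℝ) < (1 - (1/2:ℝ)^m) * V := by
      have : (0:ℝ) < 1 - (1/2:ℝ)^m := by linarith
      positivity
    nlinarith
  -- contradiction
  have : c ≤ 0 := ge_of_tendsto htend (Filter.Eventually.of_forall hlow)
  linarith
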